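/- Let w2, w3 be integers with w3 ≥ w2 > 1 and let S_{1,w2,w3} be the explicit finite set of tetrahedra defined in the context. Every tetrahedron T ∈ S_{1,w2,w3} has multi-width exactly (1, w2, w3). -/

import Mathlib

open scoped Pointwise

noncomputable section

/-- Embed an integer lattice point into real space. -/
def intEmbed {d : ℕ} (v : Fin d → ℤ) : Fin d → ℝ := fun i => (v i : ℝ)

/-- Pairing of an integer dual vector with a real point. -/
def dualPair {d : ℕ} (u : Fin d → ℤ) (x : Fin d → ℝ) : ℝ := ∑ i, (u i : ℝ) * x i

/-- The width of a set `P ⊆ ℝ^d` with respect to an integer dual vector `u`: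
`max_{x ∈ P} u·x − min_{x ∈ P} u·x`. -/
def widthIn {d : ℕ} (u : Fin d → ℤ) (P : Set (Fin d → ℝ)) : ℝ :=
  sSup (dualPair u '' P) - sInf (dualPair u '' P)

/-- `w` is a tuple of widths of `P` realized by linearly independent dual vectors. -/
def IsWidthTuple {d : ℕ} (P : Set (Fin d → ℝ)) (w : Fin d → ℝ) : Prop :=
  ∃ u : Fin d → (Fin d → ℤ), LinearIndependent ℤ u ∧ ∀ i, widthIn (u i) P = w i

/-- `w` is the multi-width of `P`: the lexicographically minimal width tuple over
linearly independent tuples of dual vectors. -/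
def IsMultiWidth {d : ℕ} (P : Set (Fin d → ℝ)) (w : Fin d → ℝ) : Prop :=
  IsWidthTuple P w ∧ ∀ w' : Fin d → ℝ, IsWidthTuple P w' → toLex w ≤ toLex w'

/-- The affine map `x ↦ A x + b` on real points, with integral `A` and `b`. -/
def unimodMap {d : ℕ} (A : Matrix (Fin d) (Fin d) ℤ) (b : Fin d → ℤ) (x : Fin d → ℝ) :
    Fin d → ℝ :=
  fun i => (∑ j, (A i j : ℝ) * x j) + (b i : ℝ)

/-- Affine unimodular equivalence of subsets of `ℝ^d`: `Q = A·P + b` with `A ∈ GL_d(ℤ)`,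
`b ∈ ℤ^d`. -/
def AffEquiv {d : ℕ} (P Q : Set (Fin d → ℝ)) : Prop :=
  ∃ A : Matrix (Fin d) (Fin d) ℤ, IsUnit A.det ∧ ∃ b : Fin d → ℤ, Q = unimodMap A b '' P

/-- A lattice polytope: the convex hull of finitely many lattice points. -/
def IsLatticePolytope {d : ℕ} (P : Set (Fin d → ℝ)) : Prop :=
  ∃ V : Finset (Fin d → ℤ), V.Nonempty ∧ P = convexHull ℝ (intEmbed '' (V : Set (Fin d → ℤ)))

/-- A lattice tetrahedron: the convex hull of 4 affinely independent lattice points in `ℝ³`. -/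
def IsLatticeTetrahedron (P : Set (Fin 3 → ℝ)) : Prop :=
  ∃ v : Fin 4 → (Fin 3 → ℤ), AffineIndependent ℝ (fun i => intEmbed (v i)) ∧
    P = convexHull ℝ (Set.range fun i => intEmbed (v i))

/-- The type of affine equivalence classes of lattice tetrahedra with multi-width `w`. -/
def TetClasses (w : Fin 3 → ℝ) : Type :=
  Quot fun P Q : {P : Set (Fin 3 → ℝ) // IsLatticeTetrahedron P ∧ IsMultiWidth P w} =>
    AffEquiv P.1 Q.1

/-- The real points of a multiset of lattice points. -/
def msetPts {d : ℕ} (S : Multiset (Fin d → ℤ)) : Set (Fin d → ℝ) :=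
  intEmbed '' {v | v ∈ S}

/-- The convex hull of a multiset of lattice points. -/
def msetHull {d : ℕ} (S : Multiset (Fin d → ℤ)) : Set (Fin d → ℝ) :=
  convexHull ℝ (msetPts S)

/-- Affine unimodular equivalence of multisets of lattice points. -/
def MsetEquiv {d : ℕ} (S T : Multiset (Fin d → ℤ)) : Prop :=
  ∃ A : Matrix (Fin d) (Fin d) ℤ, IsUnit A.det ∧ ∃ b : Fin d → ℤ,
    S.map (fun v => A.mulVec v + b) = T

/-- Affine unimodular equivalence of multisets of integers (`d = 1`). -/
def MsetEquivZ (S T : Multiset ℤ) : Prop :=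
  ∃ a : ℤ, IsUnit a ∧ ∃ b : ℤ, S.map (fun x => a * x + b) = T

/-- The width of a multiset of integers (the width of its convex hull). -/
def widthZ (S : Multiset ℤ) : ℝ :=
  sSup ((fun n : ℤ => (n : ℝ)) '' {n | n ∈ S}) - sInf ((fun n : ℤ => (n : ℝ)) '' {n | n ∈ S})

/-- `S` has a dual vector `u` of width `w1` whose image multiset `u·S` is affine
equivalent in `ℤ` to the multiset `L`. -/
def HasLineType (w1 : ℤ) (L : Multiset ℤ) (S : Multiset (Fin 2 → ℤ)) : Prop :=
  ∃ u : Fin 2 → ℤ, widthIn u (msetHull S) = (w1 : ℝ) ∧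
    MsetEquivZ (S.map fun v => ∑ i, u i * v i) L

/-- The set `S_{w₂,w₃}` of normal-form lattice triangles of multi-width `(w₂, w₃)`. -/
def TriNormalForms (w2 w3 : ℤ) : Set (Set (Fin 2 → ℝ)) :=
  {t | (∃ y1 : ℤ, 0 ≤ y1 ∧ y1 ≤ (w3 - y1) % w2 ∧
          t = convexHull ℝ ({![0, 0], ![(w2 : ℝ), (y1 : ℝ)], ![0, (w3 : ℝ)]} :
            Set (Fin 2 → ℝ))) ∨
       (∃ x2 y1 : ℤ, 0 < x2 ∧ 2 * x2 ≤ w2 ∧ 0 ≤ y1 ∧ y1 ≤ w2 - x2 ∧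
          (w2 = w3 → x2 ≤ y1) ∧
          t = convexHull ℝ ({![0, 0], ![(w2 : ℝ), (y1 : ℝ)], ![(x2 : ℝ), (w3 : ℝ)]} :
            Set (Fin 2 → ℝ))) ∨
       (∃ x2 y0 : ℤ, 1 < x2 ∧ 2 * x2 < w2 ∧ 0 < y0 ∧ y0 < x2 ∧ w2 < w3 ∧
          t = convexHull ℝ ({![0, (y0 : ℝ)], ![(w2 : ℝ), 0], ![(x2 : ℝ), (w3 : ℝ)]} :
            Set (Fin 2 → ℝ)))}

/-- The set `S_{1,w₂,w₃}` of normal-form lattice tetrahedra of multi-width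
`(1, w₂, w₃)`, for `w₃ ≥ w₂ > 1`. -/
def TetNormalForms (w2 w3 : ℤ) : Set (Set (Fin 3 → ℝ)) :=
  {T | (∃ t ∈ TriNormalForms w2 w3,
          T = convexHull ℝ (((fun p : Fin 2 → ℝ => ![0, p 0, p 1]) '' t) ∪
            {![1, 0, 0]})) ∨
       (∃ z1 : ℤ, 0 ≤ z1 ∧ 2 * z1 ≤ w2 ∧
          T = convexHull ℝ ({![0, 0, 0], ![0, (w2 : ℝ), (z1 : ℝ)], ![1, 0, 0],
            ![1, 0, (w3 : ℝ)]} : Set (Fin 3 → ℝ))) ∨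
       (∃ y1 z1 : ℤ, 0 < y1 ∧ y1 ≤ w2 ∧ w3 - w2 ≤ z1 ∧ z1 ≤ w3 ∧
          (w3 = w2 → y1 ≤ z1) ∧
          T = convexHull ℝ ({![0, 0, 0], ![0, (w2 : ℝ), (z1 : ℝ)], ![1, 0, (w3 : ℝ)],
            ![1, (y1 : ℝ), 0]} : Set (Fin 3 → ℝ))) ∨
       (∃ y1 z1 : ℤ, 0 < z1 ∧ z1 < y1 ∧ y1 < w2 ∧ (w3 = w2 → z1 ≤ w2 - y1) ∧
          T = convexHull ℝ ({![0, 0, 0], ![0, (w2 : ℝ), (w3 : ℝ)], ![1, 0, (w3 : ℝ)],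
            ![1, (y1 : ℝ), (z1 : ℝ)]} : Set (Fin 3 → ℝ)))}

/-! ### Auxiliary lemmas -/

section Aux

lemma dualPair_linear {d : ℕ} (u : Fin d → ℤ) : IsLinearMap ℝ (dualPair u) := by
  constructor
  · intro x y; simp [dualPair, mul_add, Finset.sum_add_distrib]
  · intro c x; simp [dualPair, Finset.mul_sum]; congr 1; funext i; ring

lemma hull_sub_Icc (s : Set ℝ) (hfin : s.Finite) :
    convexHull ℝ s ⊆ Set.Icc (sInf s) (sSup s) :=
  convexHull_min (fun _ hx => ⟨csInf_le hfin.bddBelow hx, le_csSup hfin.bddAbove hx⟩)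
    (convex_Icc _ _)

lemma sSup_hull_finite (s : Set ℝ) (hne : s.Nonempty) (hfin : s.Finite) :
    sSup (convexHull ℝ s) = sSup s := by
  refine le_antisymm (csSup_le (hne.mono (subset_convexHull ℝ s))
      fun x hx => (hull_sub_Icc s hfin hx).2) ?_
  exact csSup_le_csSup ⟨sSup s, fun x hx => (hull_sub_Icc s hfin hx).2⟩ hne
    (subset_convexHull ℝ s)

lemma sInf_hull_finite (s : Set ℝ) (hne : s.Nonempty) (hfin : s.Finite) :
    sInf (convexHull ℝ s) = sInf s := by
  refine le_antisymm ?_ (le_csInf (hne.mono (subset_convexHull ℝ s))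
      fun x hx => (hull_sub_Icc s hfin hx).1)
  exact csInf_le_csInf ⟨sInf s, fun x hx => (hull_sub_Icc s hfin hx).1⟩ hne
    (subset_convexHull ℝ s)

lemma sSup_four (a b c d : ℝ) : sSup ({a, b, c, d} : Set ℝ) = max a (max b (max c d)) := by
  rw [csSup_insert (Set.toFinite _).bddAbove (by simp),
      csSup_insert (Set.toFinite _).bddAbove (by simp),
      csSup_insert (Set.toFinite _).bddAbove (by simp), csSup_singleton]

lemma sInf_four (a b c d : ℝ) : sInf ({a, b, c, d} : Set ℝ) = min a (min b (min c d)) := by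
  rw [csInf_insert (Set.toFinite _).bddBelow (by simp),
      csInf_insert (Set.toFinite _).bddBelow (by simp),
      csInf_insert (Set.toFinite _).bddBelow (by simp), csInf_singleton]

/-- Integer pairing. -/
def dzip {d : ℕ} (u v : Fin d → ℤ) : ℤ := ∑ i, u i * v i

lemma dualPair_intEmbed {d : ℕ} (u v : Fin d → ℤ) :
    dualPair u (intEmbed v) = (dzip u v : ℝ) := by
  simp [dualPair, intEmbed, dzip]

lemma widthIn_hull4 (u A B C D : Fin 3 → ℤ) :
    widthIn u (convexHull ℝ ({intEmbed A, intEmbed B, intEmbed C, intEmbed D} :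
      Set (Fin 3 → ℝ))) =
    ((max (dzip u A) (max (dzip u B) (max (dzip u C) (dzip u D)))
      - min (dzip u A) (min (dzip u B) (min (dzip u C) (dzip u D))) : ℤ) : ℝ) := by
  unfold widthIn
  rw [(dualPair_linear u).image_convexHull, Set.image_insert_eq, Set.image_insert_eq,
    Set.image_insert_eq, Set.image_singleton,
    sSup_hull_finite _ (by simp) (Set.toFinite _), sInf_hull_finite _ (by simp) (Set.toFinite _),
    sSup_four, sInf_four]
  simp only [dualPair_intEmbed]
  push_cast
  ring

lemma widthIn_hull3 (u A B C : Fin 2 → ℤ) :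
    widthIn u (convexHull ℝ ({intEmbed A, intEmbed B, intEmbed C} : Set (Fin 2 → ℝ))) =
    ((max (dzip u A) (max (dzip u B) (dzip u C))
      - min (dzip u A) (min (dzip u B) (dzip u C)) : ℤ) : ℝ) := by
  unfold widthIn
  rw [(dualPair_linear u).image_convexHull, Set.image_insert_eq, Set.image_insert_eq,
    Set.image_singleton,
    sSup_hull_finite _ (by simp) (Set.toFinite _), sInf_hull_finite _ (by simp) (Set.toFinite _)]
  rw [csSup_insert (Set.toFinite _).bddAbove (by simp),
      csSup_insert (Set.toFinite _).bddAbove (by simp), csSup_singleton,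
      csInf_insert (Set.toFinite _).bddBelow (by simp),
      csInf_insert (Set.toFinite _).bddBelow (by simp), csInf_singleton]
  simp only [dualPair_intEmbed]
  push_cast
  ring

/-- Componentwise integer-cast linear map. -/
def castLM (n : ℕ) : (Fin n → ℤ) →ₗ[ℤ] (Fin n → ℚ) where
  toFun v i := (v i : ℚ)
  map_add' x y := by funext i; push_cast; simp
  map_smul' c x := by funext i; push_cast; simp

lemma linearIndependent_iff_det {n : ℕ} (u : Fin n → Fin n → ℤ) :
    LinearIndependent ℤ u ↔ (Matrix.of u).det ≠ 0 := by
  have hinj : LinearMap.ker (castLM n) = ⊥ := by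
    rw [LinearMap.ker_eq_bot]
    intro x y h
    funext i
    have h2 : ((x i : ℚ)) = (y i : ℚ) := congrFun h i
    exact_mod_cast h2
  rw [← LinearMap.linearIndependent_iff (castLM n) hinj]
  rw [LinearIndependent.iff_fractionRing (R := ℤ) (K := ℚ)]
  have : (castLM n) ∘ u = fun i =>
      ((Int.castRingHom ℚ).mapMatrix (Matrix.of u) : Matrix (Fin n) (Fin n) ℚ) i := by
    funext i j; rfl
  rw [this]
  change LinearIndependent ℚ (Matrix.row ((Int.castRingHom ℚ).mapMatrix (Matrix.of u))) ↔ _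
  rw [Matrix.linearIndependent_rows_iff_isUnit, Matrix.isUnit_iff_isUnit_det,
    isUnit_iff_ne_zero, ← RingHom.map_det]
  simp

lemma toLex_le_of_lt0 {x y : Fin 3 → ℝ} (h : x 0 < y 0) : toLex x ≤ toLex y :=
  le_of_lt ⟨0, fun j hj => absurd hj (by simp [Fin.lt_def]), h⟩

lemma toLex_le_of_eq0_lt1 {x y : Fin 3 → ℝ} (h0 : x 0 = y 0) (h : x 1 < y 1) :
    toLex x ≤ toLex y := by
  refine le_of_lt ⟨1, fun j hj => ?_, h⟩
  have : j = 0 := by omega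
  rw [this]; exact h0

lemma toLex_le_of_eq01_le2 {x y : Fin 3 → ℝ} (h0 : x 0 = y 0) (h1 : x 1 = y 1)
    (h2 : x 2 ≤ y 2) : toLex x ≤ toLex y := by
  rcases h2.lt_or_eq with h | h
  · refine le_of_lt ⟨2, fun j hj => ?_, h⟩
    have : j = 0 ∨ j = 1 := by omega
    rcases this with rfl | rfl
    exacts [h0, h1]
  · have hxy : x = y := by
      funext j
      have : j = 0 ∨ j = 1 ∨ j = 2 := by omega
      rcases this with rfl | rfl | rfl
      exacts [h0, h1, h]
    exact le_of_eq (congrArg toLex hxy)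

lemma of_toLex_le2 {x y : Fin 2 → ℝ} (h : toLex x ≤ toLex y) :
    x 0 < y 0 ∨ (x 0 = y 0 ∧ x 1 ≤ y 1) := by
  rcases h.lt_or_eq with h | h
  · obtain ⟨i, hj, hlt⟩ := h
    have : i = 0 ∨ i = 1 := by omega
    rcases this with rfl | rfl
    · exact Or.inl hlt
    · exact Or.inr ⟨hj 0 (by simp [Fin.lt_def]), le_of_lt hlt⟩
  · have hxy : x = y := congrArg ofLex h
    exact Or.inr ⟨congrFun hxy 0, le_of_eq (congrFun hxy 1)⟩

lemma emb3 (a b c : ℤ) : intEmbed ![a, b, c] = ![(a : ℝ), (b : ℝ), (c : ℝ)] := by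
  funext i; fin_cases i <;> simp [intEmbed]

lemma emb2 (a b : ℤ) : intEmbed ![a, b] = ![(a : ℝ), (b : ℝ)] := by
  funext i; fin_cases i <;> simp [intEmbed]

end Aux
section Aux2

lemma tri_width_lb (w2 w3 : ℤ) (t : Set (Fin 2 → ℝ))
    (ht : IsMultiWidth t ![(w2 : ℝ), (w3 : ℝ)]) (v : Fin 2 → ℤ)
    (hv : ¬(v 0 = 0 ∧ v 1 = 0)) : (w2 : ℝ) ≤ widthIn v t := by
  set v' : Fin 2 → ℤ := ![-(v 1), v 0] with hv'
  have hind : LinearIndependent ℤ ![v, v'] := by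
    rw [linearIndependent_iff_det, Matrix.det_fin_two]
    simp only [Matrix.of_apply, Matrix.cons_val', Matrix.cons_val_zero, Matrix.cons_val_one,
      Matrix.head_cons, Matrix.empty_val', Matrix.cons_val_fin_one, Matrix.vecHead, Matrix.vecTail, hv']
    intro h
    have h0 : v 0 * v 0 + v 1 * v 1 = 0 := by linarith [h]
    exact hv ⟨mul_self_eq_zero.mp (by nlinarith [mul_self_nonneg (v 0), mul_self_nonneg (v 1)]),
      mul_self_eq_zero.mp (by nlinarith [mul_self_nonneg (v 0), mul_self_nonneg (v 1)])⟩
  have h2 := ht.2 (fun i => widthIn (![v, v'] i) t) ⟨![v, v'], hind, fun i => rfl⟩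
  rcases of_toLex_le2 h2 with h | h
  · exact le_of_lt (by simpa using h)
  · exact le_of_eq (by simpa using h.1)

lemma master_min (w2 w3 : ℤ) (hw2 : 1 < w2) (hw23 : w2 ≤ w3) (T : Set (Fin 3 → ℝ))
    (hB : ∀ u : Fin 3 → ℤ, u 2 ≠ 0 → (w3 : ℝ) ≤ widthIn u T)
    (hC : ∀ u : Fin 3 → ℤ, u 2 = 0 → u 1 ≠ 0 → (w2 : ℝ) ≤ widthIn u T)
    (hD : ∀ u : Fin 3 → ℤ, u 1 = 0 → u 2 = 0 → widthIn u T = ((|u 0| : ℤ) : ℝ))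
    (w' : Fin 3 → ℝ) (hw' : IsWidthTuple T w') :
    toLex ![(1 : ℝ), (w2 : ℝ), (w3 : ℝ)] ≤ toLex w' := by
  obtain ⟨u, hind, hw⟩ := hw'
  have hdet := (linearIndependent_iff_det u).1 hind
  have key : ∀ i, ¬(u i 1 = 0 ∧ u i 2 = 0) → (w2 : ℝ) ≤ w' i := by
    intro i hi
    rw [← hw i]
    by_cases h2 : u i 2 = 0
    · exact hC (u i) h2 fun h1 => hi ⟨h1, h2⟩
    · exact le_trans (by exact_mod_cast hw23) (hB (u i) h2)
  have keyw3 : ∀ i, u i 2 ≠ 0 → (w3 : ℝ) ≤ w' i := fun i h => (hw i) ▸ hB (u i) h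
  have c0 : (![(1 : ℝ), (w2 : ℝ), (w3 : ℝ)]) 0 = 1 := rfl
  have c1 : (![(1 : ℝ), (w2 : ℝ), (w3 : ℝ)]) 1 = w2 := rfl
  have c2 : (![(1 : ℝ), (w2 : ℝ), (w3 : ℝ)]) 2 = w3 := rfl
  by_cases h0 : u 0 1 = 0 ∧ u 0 2 = 0
  · obtain ⟨h01, h02⟩ := h0
    have hd0 : w' 0 = ((|u 0 0| : ℤ) : ℝ) := by rw [← hw 0]; exact hD _ h01 h02
    have hdet3 : (Matrix.of u).det = u 0 0 * (u 1 1 * u 2 2 - u 1 2 * u 2 1) := by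
      rw [Matrix.det_fin_three]
      simp only [Matrix.of_apply]
      rw [h01, h02]; ring
    have hp0 : u 0 0 ≠ 0 := fun h => hdet (by rw [hdet3, h, zero_mul])
    have hcross : u 1 1 * u 2 2 - u 1 2 * u 2 1 ≠ 0 := fun h => hdet (by rw [hdet3, h, mul_zero])
    have habs : 1 ≤ |u 0 0| := Int.one_le_abs hp0
    rcases eq_or_lt_of_le habs with h1 | h1
    · have hw0 : w' 0 = 1 := by rw [hd0, ← h1]; norm_num
      have h1ne : ¬(u 1 1 = 0 ∧ u 1 2 = 0) := fun ⟨a, b⟩ => hcross (by rw [a, b]; ring)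
      have hw1 : (w2 : ℝ) ≤ w' 1 := key 1 h1ne
      rcases eq_or_lt_of_le hw1 with heq1 | hlt1
      · have hw2' : (w3 : ℝ) ≤ w' 2 := by
          by_cases hr2 : u 2 2 = 0
          · have h12 : u 1 2 ≠ 0 := fun h => hcross (by rw [hr2, h]; ring)
            have h21 : u 2 1 ≠ 0 := fun h => hcross (by rw [hr2, h]; ring)
            have hle : (w3 : ℝ) ≤ (w2 : ℝ) := heq1 ▸ keyw3 1 h12
            have h32 : (w3 : ℤ) = w2 := le_antisymm (by exact_mod_cast hle) hw23
            rw [h32]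
            exact key 2 fun hh => h21 hh.1
          · exact keyw3 2 hr2
        exact toLex_le_of_eq01_le2 (by rw [c0, hw0]) (by rw [c1, heq1]) (by rw [c2]; exact hw2')
      · exact toLex_le_of_eq0_lt1 (by rw [c0, hw0]) (by rw [c1]; exact hlt1)
    · apply toLex_le_of_lt0
      rw [c0, hd0]
      exact_mod_cast h1
  · apply toLex_le_of_lt0
    rw [c0]
    calc (1 : ℝ) < w2 := by exact_mod_cast hw2
    _ ≤ w' 0 := key 0 h0

lemma fam1_min (w2 w3 : ℤ) (hw2 : 1 < w2) (hw23 : w2 ≤ w3) (t : Set (Fin 2 → ℝ))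
    (ht : IsMultiWidth t ![(w2 : ℝ), (w3 : ℝ)]) (T : Set (Fin 3 → ℝ))
    (hG : ∀ u : Fin 3 → ℤ, widthIn ![u 1, u 2] t ≤ widthIn u T)
    (hD : ∀ u : Fin 3 → ℤ, u 1 = 0 → u 2 = 0 → widthIn u T = ((|u 0| : ℤ) : ℝ))
    (w' : Fin 3 → ℝ) (hw' : IsWidthTuple T w') :
    toLex ![(1 : ℝ), (w2 : ℝ), (w3 : ℝ)] ≤ toLex w' := by
  obtain ⟨u, hind, hw⟩ := hw'
  have hdet := (linearIndependent_iff_det u).1 hind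
  have key : ∀ i, ¬(u i 1 = 0 ∧ u i 2 = 0) → (w2 : ℝ) ≤ w' i := by
    intro i hi
    rw [← hw i]
    refine le_trans (tri_width_lb w2 w3 t ht ![u i 1, u i 2] ?_) (hG (u i))
    simpa using hi
  have c0 : (![(1 : ℝ), (w2 : ℝ), (w3 : ℝ)]) 0 = 1 := rfl
  have c1 : (![(1 : ℝ), (w2 : ℝ), (w3 : ℝ)]) 1 = w2 := rfl
  have c2 : (![(1 : ℝ), (w2 : ℝ), (w3 : ℝ)]) 2 = w3 := rfl
  by_cases h0 : u 0 1 = 0 ∧ u 0 2 = 0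
  · obtain ⟨h01, h02⟩ := h0
    have hd0 : w' 0 = ((|u 0 0| : ℤ) : ℝ) := by rw [← hw 0]; exact hD _ h01 h02
    have hdet3 : (Matrix.of u).det = u 0 0 * (u 1 1 * u 2 2 - u 1 2 * u 2 1) := by
      rw [Matrix.det_fin_three]
      simp only [Matrix.of_apply]
      rw [h01, h02]; ring
    have hp0 : u 0 0 ≠ 0 := fun h => hdet (by rw [hdet3, h, zero_mul])
    have hcross : u 1 1 * u 2 2 - u 1 2 * u 2 1 ≠ 0 := fun h => hdet (by rw [hdet3, h, mul_zero])
    have habs : 1 ≤ |u 0 0| := Int.one_le_abs hp0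
    rcases eq_or_lt_of_le habs with h1 | h1
    · have hw0 : w' 0 = 1 := by rw [hd0, ← h1]; norm_num
      -- the two projected duals
      set v2 : Fin 2 → ℤ := ![u 1 1, u 1 2] with hv2
      set v3 : Fin 2 → ℤ := ![u 2 1, u 2 2] with hv3
      have hind2 : LinearIndependent ℤ ![v2, v3] := by
        rw [linearIndependent_iff_det, Matrix.det_fin_two]
        simp only [Matrix.of_apply, Matrix.cons_val', Matrix.cons_val_zero, Matrix.cons_val_one,
          Matrix.head_cons, Matrix.empty_val', Matrix.cons_val_fin_one, Matrix.vecHead, Matrix.vecTail, hv2, hv3]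
        exact hcross
      have h2 := ht.2 (fun i => widthIn (![v2, v3] i) t) ⟨![v2, v3], hind2, fun i => rfl⟩
      have hG2 : widthIn v2 t ≤ w' 1 := by rw [← hw 1]; exact hG (u 1)
      have hG3 : widthIn v3 t ≤ w' 2 := by rw [← hw 2]; exact hG (u 2)
      rcases of_toLex_le2 h2 with h | h
    -- h : (w2:ℝ) < widthIn v2 t  (after simp)
      · refine toLex_le_of_eq0_lt1 (by rw [c0, hw0]) ?_
        rw [c1]
        exact lt_of_lt_of_le (by simpa using h) hG2
      · have he : (w2 : ℝ) = widthIn v2 t := by simpa using h.1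
        have hle : (w3 : ℝ) ≤ widthIn v3 t := by simpa using h.2
        have hw1 : (w2 : ℝ) ≤ w' 1 := he ▸ hG2
        rcases eq_or_lt_of_le hw1 with heq1 | hlt1
        · exact toLex_le_of_eq01_le2 (by rw [c0, hw0]) (by rw [c1, heq1])
            (by rw [c2]; exact le_trans hle hG3)
        · exact toLex_le_of_eq0_lt1 (by rw [c0, hw0]) (by rw [c1]; exact hlt1)
    · apply toLex_le_of_lt0
      rw [c0, hd0]
      exact_mod_cast h1
  · apply toLex_le_of_lt0
    rw [c0]
    calc (1 : ℝ) < w2 := by exact_mod_cast hw2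
    _ ≤ w' 0 := key 0 h0

lemma fam3_core (w2 w3 y1 z1 q r : ℤ) (hw2 : 1 < w2) (hw23 : w2 ≤ w3) (hy0 : 0 < y1)
    (hyw : y1 ≤ w2) (hz0 : w3 - w2 ≤ z1) (hr : 1 ≤ r) :
    w3 ≤ r * w3 - q * y1 ∨ w3 ≤ q * w2 + r * z1 := by
  by_cases hq : q * y1 ≤ r * w3 - w3
  · left; linarith
  · right
    push_neg at hq
    have hq1 : 1 ≤ q := by
      by_contra h
      push_neg at h
      have h1 : q * y1 ≤ 0 := mul_nonpos_of_nonpos_of_nonneg (by omega) hy0.le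
      have h2 : 0 ≤ (r - 1) * w3 := mul_nonneg (by omega) (by omega)
      nlinarith
    rcases eq_or_lt_of_le hr with h1 | h2
    · have ha : w2 ≤ q * w2 := le_mul_of_one_le_left (by omega) hq1
      have hb : r * z1 = z1 := by rw [← h1]; ring
      linarith
    · have ha : q * y1 ≤ q * w2 := mul_le_mul_of_nonneg_left hyw (by omega)
      have hb : 2 * w3 ≤ r * w3 := mul_le_mul_of_nonneg_right (by omega) (by omega)
      have hc : 0 ≤ r * z1 := mul_nonneg (by omega) (by omega)
      nlinarith

lemma fam4_core (w2 w3 y1 z1 q r : ℤ) (hw2 : 1 < w2) (hw23 : w2 ≤ w3) (hz0 : 0 < z1)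
    (hzy : z1 < y1) (hyw : y1 < w2) (hr : 1 ≤ r) :
    w3 ≤ q * w2 + r * w3 ∨ w3 ≤ -(q * w2 + r * w3) ∨ w3 ≤ r * w3 - q * y1 - r * z1 := by
  by_cases h1 : w3 ≤ q * w2 + r * w3
  · exact Or.inl h1
  by_cases h2 : q * w2 + r * w3 ≤ -w3
  · right; left; omega
  right; right
  push_neg at h1 h2
  have hw3r : w3 ≤ r * w3 := le_mul_of_one_le_left (by omega) hr
  have hq : q ≤ -1 := by
    by_contra h
    push_neg at h
    have : 0 ≤ q * w2 := mul_nonneg (by omega) (by omega)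
    linarith
  have ha : q * y1 ≤ -y1 := by nlinarith [mul_nonpos_of_nonpos_of_nonneg (show q + 1 ≤ 0 by omega) (show (0:ℤ) ≤ y1 by omega)]
  have hb : r * z1 ≤ r * w3 - (w3 - z1) := by
    nlinarith [mul_nonneg (show (0:ℤ) ≤ r - 1 by omega) (show (0:ℤ) ≤ w3 - z1 by omega)]
  linarith

end Aux2

lemma dzip3 (u : Fin 3 → ℤ) (a b c : ℤ) :
    dzip u ![a, b, c] = u 0 * a + u 1 * b + u 2 * c := by
  simp [dzip, Fin.sum_univ_three]

lemma dzip2 (u : Fin 2 → ℤ) (a b : ℤ) : dzip u ![a, b] = u 0 * a + u 1 * b := by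
  simp [dzip, Fin.sum_univ_two]

lemma embLin : IsLinearMap ℝ (fun p : Fin 2 → ℝ => ![(0 : ℝ), p 0, p 1]) := by
  constructor
  · intro x y; funext i; fin_cases i <;> simp
  · intro c x; funext i; fin_cases i <;> simp
set_option maxHeartbeats 2000000 in
/-- Every tetrahedron in `S_{1,w₂,w₃}`, `w₃ ≥ w₂ > 1`, has multi-width exactly
`(1, w₂, w₃)`.  (One may assume every triangle in `S_{w₂,w₃}` has multi-width
`(w₂, w₃)`.) -/
theorem tetrahedron_normal_form_multiwidth (w2 w3 : ℤ) (hw2 : 1 < w2) (hw23 : w2 ≤ w3)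
    (htri : ∀ t ∈ TriNormalForms w2 w3, IsMultiWidth t ![(w2 : ℝ), (w3 : ℝ)])
    (T : Set (Fin 3 → ℝ)) (hT : T ∈ TetNormalForms w2 w3) :
    IsMultiWidth T ![1, (w2 : ℝ), (w3 : ℝ)] := by
  rcases hT with ⟨t, ht, hTe⟩ | ⟨z1, hz0, hz1, hTe⟩ |
    ⟨y1, z1, hy0, hyw, hz0, hz1, _, hTe⟩ | ⟨y1, z1, hz0, hzy, hyw, _, hTe⟩
  · -- family 1
    have htm := htri t ht
    rcases ht with ⟨y1, hy0, hym, hte⟩ | ⟨x2, y1, hx0, hx2, hy0, hyw, _, hte⟩ |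
      ⟨x2, y0, hx1, hx2, hy0, hyx, hww, hte⟩
    · -- triangle subfamily
      have hm1 : 0 ≤ (w3 - y1) % w2 := Int.emod_nonneg _ (by omega)
      have hm2 : (w3 - y1) % w2 < w2 := Int.emod_lt_of_pos _ (by omega)
      have ht3 : t = convexHull ℝ ({intEmbed ![0, 0], intEmbed ![w2, y1],
          intEmbed ![0, w3]} : Set (Fin 2 → ℝ)) := by
        rw [hte]; congr 1
        rw [emb2, emb2, emb2]; norm_num
      have hT4 : T = convexHull ℝ ({intEmbed ![1, 0, 0], intEmbed ![0, 0, 0],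
          intEmbed ![0, w2, y1], intEmbed ![0, 0, w3]} : Set (Fin 3 → ℝ)) := by
        rw [hTe, hte, embLin.image_convexHull, convexHull_convexHull_union_left,
          Set.image_insert_eq, Set.image_insert_eq, Set.image_singleton, Set.union_singleton]
        congr 1
        rw [emb3, emb3, emb3, emb3]
        norm_num
      have hwidth : ∀ u : Fin 3 → ℤ, widthIn u T =
          ((max (dzip u ![1, 0, 0]) (max (dzip u ![0, 0, 0]) (max (dzip u ![0, w2, y1]) (dzip u ![0, 0, w3])))
            - min (dzip u ![1, 0, 0]) (min (dzip u ![0, 0, 0]) (min (dzip u ![0, w2, y1]) (dzip u ![0, 0, w3]))) : ℤ) : ℝ) := by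
        intro u; rw [hT4, widthIn_hull4]
      have hwt : ∀ v : Fin 2 → ℤ, widthIn v t =
          ((max (dzip v ![0, 0]) (max (dzip v ![w2, y1]) (dzip v ![0, w3]))
            - min (dzip v ![0, 0]) (min (dzip v ![w2, y1]) (dzip v ![0, w3])) : ℤ) : ℝ) := by
        intro v; rw [ht3, widthIn_hull3]
      constructor
      · refine ⟨![![1, 0, 0], ![0, 1, 0], ![0, 0, 1]], ?_, ?_⟩
        · rw [linearIndependent_iff_det, Matrix.det_fin_three]
          simp
        · intro i
          fin_cases i <;> rw [hwidth] <;> simp [dzip3] <;> norm_cast <;> omega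
      · intro w' hw'
        refine fam1_min w2 w3 hw2 hw23 t htm T ?_ ?_ w' hw'
        · intro u
          rw [hwidth u, hwt ![u 1, u 2]]
          have : (max (dzip ![u 1, u 2] ![0, 0]) (max (dzip ![u 1, u 2] ![w2, y1]) (dzip ![u 1, u 2] ![0, w3]))
            - min (dzip ![u 1, u 2] ![0, 0]) (min (dzip ![u 1, u 2] ![w2, y1]) (dzip ![u 1, u 2] ![0, w3]))) ≤ max (dzip u ![1, 0, 0]) (max (dzip u ![0, 0, 0]) (max (dzip u ![0, w2, y1]) (dzip u ![0, 0, w3])))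
            - min (dzip u ![1, 0, 0]) (min (dzip u ![0, 0, 0]) (min (dzip u ![0, w2, y1]) (dzip u ![0, 0, w3]))) := by
            simp only [dzip3, dzip2, Matrix.cons_val_zero, Matrix.cons_val_one, Matrix.head_cons,
              mul_zero, mul_one, zero_add, add_zero, zero_mul, one_mul]
            omega
          exact_mod_cast this
        · intro u hu1 hu2
          rw [hwidth u]
          have : (max (dzip u ![1, 0, 0]) (max (dzip u ![0, 0, 0]) (max (dzip u ![0, w2, y1]) (dzip u ![0, 0, w3])))
            - min (dzip u ![1, 0, 0]) (min (dzip u ![0, 0, 0]) (min (dzip u ![0, w2, y1]) (dzip u ![0, 0, w3])))) = |u 0| := by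
            simp only [dzip3, mul_zero, mul_one, zero_add, add_zero, zero_mul, one_mul]
            rw [hu1, hu2]
            rcases le_or_gt 0 (u 0) with h | h
            · rw [abs_of_nonneg h]; omega
            · rw [abs_of_neg h]; omega
          exact_mod_cast this
    · -- triangle subfamily
      have ht3 : t = convexHull ℝ ({intEmbed ![0, 0], intEmbed ![w2, y1],
          intEmbed ![x2, w3]} : Set (Fin 2 → ℝ)) := by
        rw [hte]; congr 1
        rw [emb2, emb2, emb2]; norm_num
      have hT4 : T = convexHull ℝ ({intEmbed ![1, 0, 0], intEmbed ![0, 0, 0],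
          intEmbed ![0, w2, y1], intEmbed ![0, x2, w3]} : Set (Fin 3 → ℝ)) := by
        rw [hTe, hte, embLin.image_convexHull, convexHull_convexHull_union_left,
          Set.image_insert_eq, Set.image_insert_eq, Set.image_singleton, Set.union_singleton]
        congr 1
        rw [emb3, emb3, emb3, emb3]
        norm_num
      have hwidth : ∀ u : Fin 3 → ℤ, widthIn u T =
          ((max (dzip u ![1, 0, 0]) (max (dzip u ![0, 0, 0]) (max (dzip u ![0, w2, y1]) (dzip u ![0, x2, w3])))
            - min (dzip u ![1, 0, 0]) (min (dzip u ![0, 0, 0]) (min (dzip u ![0, w2, y1]) (dzip u ![0, x2, w3]))) : ℤ) : ℝ) := by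
        intro u; rw [hT4, widthIn_hull4]
      have hwt : ∀ v : Fin 2 → ℤ, widthIn v t =
          ((max (dzip v ![0, 0]) (max (dzip v ![w2, y1]) (dzip v ![x2, w3]))
            - min (dzip v ![0, 0]) (min (dzip v ![w2, y1]) (dzip v ![x2, w3])) : ℤ) : ℝ) := by
        intro v; rw [ht3, widthIn_hull3]
      constructor
      · refine ⟨![![1, 0, 0], ![0, 1, 0], ![0, 0, 1]], ?_, ?_⟩
        · rw [linearIndependent_iff_det, Matrix.det_fin_three]
          simp
        · intro i
          fin_cases i <;> rw [hwidth] <;> simp [dzip3] <;> norm_cast <;> omega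
      · intro w' hw'
        refine fam1_min w2 w3 hw2 hw23 t htm T ?_ ?_ w' hw'
        · intro u
          rw [hwidth u, hwt ![u 1, u 2]]
          have : (max (dzip ![u 1, u 2] ![0, 0]) (max (dzip ![u 1, u 2] ![w2, y1]) (dzip ![u 1, u 2] ![x2, w3]))
            - min (dzip ![u 1, u 2] ![0, 0]) (min (dzip ![u 1, u 2] ![w2, y1]) (dzip ![u 1, u 2] ![x2, w3]))) ≤ max (dzip u ![1, 0, 0]) (max (dzip u ![0, 0, 0]) (max (dzip u ![0, w2, y1]) (dzip u ![0, x2, w3])))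
            - min (dzip u ![1, 0, 0]) (min (dzip u ![0, 0, 0]) (min (dzip u ![0, w2, y1]) (dzip u ![0, x2, w3]))) := by
            simp only [dzip3, dzip2, Matrix.cons_val_zero, Matrix.cons_val_one, Matrix.head_cons,
              mul_zero, mul_one, zero_add, add_zero, zero_mul, one_mul]
            omega
          exact_mod_cast this
        · intro u hu1 hu2
          rw [hwidth u]
          have : (max (dzip u ![1, 0, 0]) (max (dzip u ![0, 0, 0]) (max (dzip u ![0, w2, y1]) (dzip u ![0, x2, w3])))
            - min (dzip u ![1, 0, 0]) (min (dzip u ![0, 0, 0]) (min (dzip u ![0, w2, y1]) (dzip u ![0, x2, w3])))) = |u 0| := by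
            simp only [dzip3, mul_zero, mul_one, zero_add, add_zero, zero_mul, one_mul]
            rw [hu1, hu2]
            rcases le_or_gt 0 (u 0) with h | h
            · rw [abs_of_nonneg h]; omega
            · rw [abs_of_neg h]; omega
          exact_mod_cast this
    · -- triangle subfamily
      have ht3 : t = convexHull ℝ ({intEmbed ![0, y0], intEmbed ![w2, 0],
          intEmbed ![x2, w3]} : Set (Fin 2 → ℝ)) := by
        rw [hte]; congr 1
        rw [emb2, emb2, emb2]; norm_num
      have hT4 : T = convexHull ℝ ({intEmbed ![1, 0, 0], intEmbed ![0, 0, y0],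
          intEmbed ![0, w2, 0], intEmbed ![0, x2, w3]} : Set (Fin 3 → ℝ)) := by
        rw [hTe, hte, embLin.image_convexHull, convexHull_convexHull_union_left,
          Set.image_insert_eq, Set.image_insert_eq, Set.image_singleton, Set.union_singleton]
        congr 1
        rw [emb3, emb3, emb3, emb3]
        norm_num
      have hwidth : ∀ u : Fin 3 → ℤ, widthIn u T =
          ((max (dzip u ![1, 0, 0]) (max (dzip u ![0, 0, y0]) (max (dzip u ![0, w2, 0]) (dzip u ![0, x2, w3])))
            - min (dzip u ![1, 0, 0]) (min (dzip u ![0, 0, y0]) (min (dzip u ![0, w2, 0]) (dzip u ![0, x2, w3]))) : ℤ) : ℝ) := by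
        intro u; rw [hT4, widthIn_hull4]
      have hwt : ∀ v : Fin 2 → ℤ, widthIn v t =
          ((max (dzip v ![0, y0]) (max (dzip v ![w2, 0]) (dzip v ![x2, w3]))
            - min (dzip v ![0, y0]) (min (dzip v ![w2, 0]) (dzip v ![x2, w3])) : ℤ) : ℝ) := by
        intro v; rw [ht3, widthIn_hull3]
      constructor
      · refine ⟨![![1, 0, 0], ![0, 1, 0], ![0, 0, 1]], ?_, ?_⟩
        · rw [linearIndependent_iff_det, Matrix.det_fin_three]
          simp
        · intro i
          fin_cases i <;> rw [hwidth] <;> simp [dzip3] <;> norm_cast <;> omega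
      · intro w' hw'
        refine fam1_min w2 w3 hw2 hw23 t htm T ?_ ?_ w' hw'
        · intro u
          rw [hwidth u, hwt ![u 1, u 2]]
          have : (max (dzip ![u 1, u 2] ![0, y0]) (max (dzip ![u 1, u 2] ![w2, 0]) (dzip ![u 1, u 2] ![x2, w3]))
            - min (dzip ![u 1, u 2] ![0, y0]) (min (dzip ![u 1, u 2] ![w2, 0]) (dzip ![u 1, u 2] ![x2, w3]))) ≤ max (dzip u ![1, 0, 0]) (max (dzip u ![0, 0, y0]) (max (dzip u ![0, w2, 0]) (dzip u ![0, x2, w3])))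
            - min (dzip u ![1, 0, 0]) (min (dzip u ![0, 0, y0]) (min (dzip u ![0, w2, 0]) (dzip u ![0, x2, w3]))) := by
            simp only [dzip3, dzip2, Matrix.cons_val_zero, Matrix.cons_val_one, Matrix.head_cons,
              mul_zero, mul_one, zero_add, add_zero, zero_mul, one_mul]
            omega
          exact_mod_cast this
        · intro u hu1 hu2
          rw [hwidth u]
          have : (max (dzip u ![1, 0, 0]) (max (dzip u ![0, 0, y0]) (max (dzip u ![0, w2, 0]) (dzip u ![0, x2, w3])))
            - min (dzip u ![1, 0, 0]) (min (dzip u ![0, 0, y0]) (min (dzip u ![0, w2, 0]) (dzip u ![0, x2, w3])))) = |u 0| := by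
            simp only [dzip3, mul_zero, mul_one, zero_add, add_zero, zero_mul, one_mul]
            rw [hu1, hu2]
            rcases le_or_gt 0 (u 0) with h | h
            · rw [abs_of_nonneg h]; omega
            · rw [abs_of_neg h]; omega
          exact_mod_cast this
  · -- family 2
    have hT4 : T = convexHull ℝ ({intEmbed ![0, 0, 0], intEmbed ![0, w2, z1],
        intEmbed ![1, 0, 0], intEmbed ![1, 0, w3]} : Set (Fin 3 → ℝ)) := by
      rw [hTe]; congr 1
      rw [emb3, emb3, emb3, emb3]; norm_num
    have hwidth : ∀ u : Fin 3 → ℤ, widthIn u T =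
        ((max (dzip u ![0, 0, 0]) (max (dzip u ![0, w2, z1])
            (max (dzip u ![1, 0, 0]) (dzip u ![1, 0, w3])))
          - min (dzip u ![0, 0, 0]) (min (dzip u ![0, w2, z1])
            (min (dzip u ![1, 0, 0]) (dzip u ![1, 0, w3]))) : ℤ) : ℝ) := by
      intro u; rw [hT4, widthIn_hull4]
    constructor
    · refine ⟨![![1, 0, 0], ![0, 1, 0], ![0, 0, 1]], ?_, ?_⟩
      · rw [linearIndependent_iff_det, Matrix.det_fin_three]
        simp
      · intro i
        fin_cases i <;> rw [hwidth] <;> simp [dzip3] <;> norm_cast <;> omega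
    · intro w' hw'
      refine master_min w2 w3 hw2 hw23 T ?_ ?_ ?_ w' hw'
      · intro u hu
        rw [hwidth u]
        have : w3 ≤ max (dzip u ![0, 0, 0]) (max (dzip u ![0, w2, z1])
            (max (dzip u ![1, 0, 0]) (dzip u ![1, 0, w3])))
          - min (dzip u ![0, 0, 0]) (min (dzip u ![0, w2, z1])
            (min (dzip u ![1, 0, 0]) (dzip u ![1, 0, w3]))) := by
          simp only [dzip3, mul_zero, mul_one, zero_add, add_zero, zero_mul, one_mul]
          rcases lt_or_gt_of_ne hu with h | h
          · have h1 : w3 ≤ -(u 2 * w3) := by nlinarith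
            omega
          · have h1 : w3 ≤ u 2 * w3 := le_mul_of_one_le_left (by omega) (by omega)
            omega
        exact_mod_cast this
      · intro u hu2 hu1
        rw [hwidth u]
        have : w2 ≤ max (dzip u ![0, 0, 0]) (max (dzip u ![0, w2, z1])
            (max (dzip u ![1, 0, 0]) (dzip u ![1, 0, w3])))
          - min (dzip u ![0, 0, 0]) (min (dzip u ![0, w2, z1])
            (min (dzip u ![1, 0, 0]) (dzip u ![1, 0, w3]))) := by
          simp only [dzip3, mul_zero, mul_one, zero_add, add_zero, zero_mul, one_mul]
          rw [hu2]
          rcases lt_or_gt_of_ne hu1 with h | h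
          · have h1 : w2 ≤ -(u 1 * w2) := by nlinarith
            omega
          · have h1 : w2 ≤ u 1 * w2 := le_mul_of_one_le_left (by omega) (by omega)
            omega
        exact_mod_cast this
      · intro u hu1 hu2
        rw [hwidth u]
        have : (max (dzip u ![0, 0, 0]) (max (dzip u ![0, w2, z1])
            (max (dzip u ![1, 0, 0]) (dzip u ![1, 0, w3])))
          - min (dzip u ![0, 0, 0]) (min (dzip u ![0, w2, z1])
            (min (dzip u ![1, 0, 0]) (dzip u ![1, 0, w3])))) = |u 0| := by
          simp only [dzip3, mul_zero, mul_one, zero_add, add_zero, zero_mul, one_mul]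
          rw [hu1, hu2]
          rcases le_or_gt 0 (u 0) with h | h
          · rw [abs_of_nonneg h]; omega
          · rw [abs_of_neg h]; omega
        exact_mod_cast this
  · -- family block
    have hT4 : T = convexHull ℝ ({intEmbed ![0, 0, 0], intEmbed ![0, w2, z1],
        intEmbed ![1, 0, w3], intEmbed ![1, y1, 0]} : Set (Fin 3 → ℝ)) := by
      rw [hTe]; congr 1
      rw [emb3, emb3, emb3, emb3]; norm_num
    have hwidth : ∀ u : Fin 3 → ℤ, widthIn u T =
        ((max (dzip u ![0, 0, 0]) (max (dzip u ![0, w2, z1]) (max (dzip u ![1, 0, w3]) (dzip u ![1, y1, 0])))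
          - min (dzip u ![0, 0, 0]) (min (dzip u ![0, w2, z1]) (min (dzip u ![1, 0, w3]) (dzip u ![1, y1, 0]))) : ℤ) : ℝ) := by
      intro u; rw [hT4, widthIn_hull4]
    constructor
    · refine ⟨![![1, 0, 0], ![0, 1, 0], ![0, 0, 1]], ?_, ?_⟩
      · rw [linearIndependent_iff_det, Matrix.det_fin_three]
        simp
      · intro i
        fin_cases i <;> rw [hwidth] <;> simp [dzip3] <;> norm_cast <;> omega
    · intro w' hw'
      refine master_min w2 w3 hw2 hw23 T ?_ ?_ ?_ w' hw'
      · intro u hu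
        rw [hwidth u]
        have : w3 ≤ max (dzip u ![0, 0, 0]) (max (dzip u ![0, w2, z1]) (max (dzip u ![1, 0, w3]) (dzip u ![1, y1, 0])))
          - min (dzip u ![0, 0, 0]) (min (dzip u ![0, w2, z1]) (min (dzip u ![1, 0, w3]) (dzip u ![1, y1, 0]))) := by
          simp only [dzip3, mul_zero, mul_one, zero_add, add_zero, zero_mul, one_mul]
          rcases lt_or_gt_of_ne hu with h | h
          · have hcore := fam3_core w2 w3 y1 z1 (-(u 1)) (-(u 2)) hw2 hw23 hy0 hyw hz0 (by omega)
            simp only [neg_mul] at hcore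
            rcases hcore with h1 | h1 <;> omega
          · have hcore := fam3_core w2 w3 y1 z1 (u 1) (u 2) hw2 hw23 hy0 hyw hz0 (by omega)
            rcases hcore with h1 | h1 <;> omega
        exact_mod_cast this
      · intro u hu2 hu1
        rw [hwidth u]
        have : w2 ≤ max (dzip u ![0, 0, 0]) (max (dzip u ![0, w2, z1]) (max (dzip u ![1, 0, w3]) (dzip u ![1, y1, 0])))
          - min (dzip u ![0, 0, 0]) (min (dzip u ![0, w2, z1]) (min (dzip u ![1, 0, w3]) (dzip u ![1, y1, 0]))) := by
          simp only [dzip3, mul_zero, mul_one, zero_add, add_zero, zero_mul, one_mul]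
          rw [hu2]
          rcases lt_or_gt_of_ne hu1 with h | h
          · have h1 : w2 ≤ -(u 1 * w2) := by nlinarith
            omega
          · have h1 : w2 ≤ u 1 * w2 := le_mul_of_one_le_left (by omega) (by omega)
            omega
        exact_mod_cast this
      · intro u hu1 hu2
        rw [hwidth u]
        have : (max (dzip u ![0, 0, 0]) (max (dzip u ![0, w2, z1]) (max (dzip u ![1, 0, w3]) (dzip u ![1, y1, 0])))
          - min (dzip u ![0, 0, 0]) (min (dzip u ![0, w2, z1]) (min (dzip u ![1, 0, w3]) (dzip u ![1, y1, 0])))) = |u 0| := by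
          simp only [dzip3, mul_zero, mul_one, zero_add, add_zero, zero_mul, one_mul]
          rw [hu1, hu2]
          rcases le_or_gt 0 (u 0) with h | h
          · rw [abs_of_nonneg h]; omega
          · rw [abs_of_neg h]; omega
        exact_mod_cast this
  · -- family block
    have hT4 : T = convexHull ℝ ({intEmbed ![0, 0, 0], intEmbed ![0, w2, w3],
        intEmbed ![1, 0, w3], intEmbed ![1, y1, z1]} : Set (Fin 3 → ℝ)) := by
      rw [hTe]; congr 1
      rw [emb3, emb3, emb3, emb3]; norm_num
    have hwidth : ∀ u : Fin 3 → ℤ, widthIn u T =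
        ((max (dzip u ![0, 0, 0]) (max (dzip u ![0, w2, w3]) (max (dzip u ![1, 0, w3]) (dzip u ![1, y1, z1])))
          - min (dzip u ![0, 0, 0]) (min (dzip u ![0, w2, w3]) (min (dzip u ![1, 0, w3]) (dzip u ![1, y1, z1]))) : ℤ) : ℝ) := by
      intro u; rw [hT4, widthIn_hull4]
    constructor
    · refine ⟨![![1, 0, 0], ![0, 1, 0], ![0, 0, 1]], ?_, ?_⟩
      · rw [linearIndependent_iff_det, Matrix.det_fin_three]
        simp
      · intro i
        fin_cases i <;> rw [hwidth] <;> simp [dzip3] <;> norm_cast <;> omega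
    · intro w' hw'
      refine master_min w2 w3 hw2 hw23 T ?_ ?_ ?_ w' hw'
      · intro u hu
        rw [hwidth u]
        have : w3 ≤ max (dzip u ![0, 0, 0]) (max (dzip u ![0, w2, w3]) (max (dzip u ![1, 0, w3]) (dzip u ![1, y1, z1])))
          - min (dzip u ![0, 0, 0]) (min (dzip u ![0, w2, w3]) (min (dzip u ![1, 0, w3]) (dzip u ![1, y1, z1]))) := by
          simp only [dzip3, mul_zero, mul_one, zero_add, add_zero, zero_mul, one_mul]
          rcases lt_or_gt_of_ne hu with h | h
          · have hcore := fam4_core w2 w3 y1 z1 (-(u 1)) (-(u 2)) hw2 hw23 hz0 hzy hyw (by omega)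
            simp only [neg_mul] at hcore
            rcases hcore with h1 | h1 | h1 <;> omega
          · have hcore := fam4_core w2 w3 y1 z1 (u 1) (u 2) hw2 hw23 hz0 hzy hyw (by omega)
            rcases hcore with h1 | h1 | h1 <;> omega
        exact_mod_cast this
      · intro u hu2 hu1
        rw [hwidth u]
        have : w2 ≤ max (dzip u ![0, 0, 0]) (max (dzip u ![0, w2, w3]) (max (dzip u ![1, 0, w3]) (dzip u ![1, y1, z1])))
          - min (dzip u ![0, 0, 0]) (min (dzip u ![0, w2, w3]) (min (dzip u ![1, 0, w3]) (dzip u ![1, y1, z1]))) := by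
          simp only [dzip3, mul_zero, mul_one, zero_add, add_zero, zero_mul, one_mul]
          rw [hu2]
          rcases lt_or_gt_of_ne hu1 with h | h
          · have h1 : w2 ≤ -(u 1 * w2) := by nlinarith
            omega
          · have h1 : w2 ≤ u 1 * w2 := le_mul_of_one_le_left (by omega) (by omega)
            omega
        exact_mod_cast this
      · intro u hu1 hu2
        rw [hwidth u]
        have : (max (dzip u ![0, 0, 0]) (max (dzip u ![0, w2, w3]) (max (dzip u ![1, 0, w3]) (dzip u ![1, y1, z1])))
          - min (dzip u ![0, 0, 0]) (min (dzip u ![0, w2, w3]) (min (dzip u ![1, 0, w3]) (dzip u ![1, y1, z1])))) = |u 0| := by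
          simp only [dzip3, mul_zero, mul_one, zero_add, add_zero, zero_mul, one_mul]
          rw [hu1, hu2]
          rcases le_or_gt 0 (u 0) with h | h
          · rw [abs_of_nonneg h]; omega
          · rw [abs_of_neg h]; omega
        exact_mod_cast this
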